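/- Suppose m ≥ N and the deviations Δ₁,…,Δ_m are i.i.d. real random variables with an arbitrary common distribution. Then the randomly sampled Dirichlet kernel is an isometry in expectation: for every v ∈ ℂ^N, E‖Sv‖₂² = (m/N)‖v‖₂², equivalently E‖𝒩v‖₂² = (m/N)‖v‖₂², where the expectation is over the random deviations. -/

import Mathlib

open scoped BigOperators
open MeasureTheory Matrix

noncomputable section

/-- The complex exponential `e(x) = exp(2πix)`. -/
def ce (x : ℝ) : ℂ := Complex.exp (2 * Real.pi * Complex.I * x)

/-- Half-bandwidth `Ñ = (N-1)/2`. -/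
def Nt (N : ℕ) : ℤ := ((N : ℤ) - 1) / 2

/-- Uniform grid point `t_p = (p-1)/N - 1/2` (zero-based index). -/
def tg (N : ℕ) (p : Fin N) : ℝ := (p : ℝ) / N - 1 / 2

/-- Dirichlet interpolation matrix `S ∈ ℂ^{m×N}`. -/
def dirS (N m : ℕ) (tt : Fin m → ℝ) : Matrix (Fin m) (Fin N) ℂ :=
  fun k p => (N : ℂ)⁻¹ * ∑ u ∈ Finset.Icc (-(Nt N)) (Nt N), ce (u * (tg N p - tt k))

/-- Centered DFT matrix `F ∈ ℂ^{N×N}`. -/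
def dftF (N : ℕ) : Matrix (Fin N) (Fin N) ℂ :=
  fun p u => ((Real.sqrt N : ℂ))⁻¹ * ce (-(tg N p) * ((u : ℤ) - Nt N))

/-- DFT-incoherence parameter of `Ψ`. -/
def dftIncoh (N n : ℕ) (Ψ : Matrix (Fin N) (Fin n) ℂ) : ℝ :=
  ⨆ ℓ : Fin n, ∑ k : Fin N, ‖((dftF N)ᴴ * Ψ) k ℓ‖

/-- Euclidean norm on `ℂ^n`. -/
def norm2 {n : ℕ} (v : Fin n → ℂ) : ℝ := Real.sqrt (∑ i, ‖v i‖ ^ 2)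

/-- `ℓ₁` norm on `ℂ^n`. -/
def norm1 {n : ℕ} (v : Fin n → ℂ) : ℝ := ∑ i, ‖v i‖

/-- `v` has at most `s` nonzero entries. -/
def Sparse {n : ℕ} (s : ℕ) (v : Fin n → ℂ) : Prop :=
  (Finset.univ.filter fun i => v i ≠ 0).card ≤ s

/-- Error of the best `s`-sparse approximation of `g` in `ℓ₁`. -/
def sperr {n : ℕ} (s : ℕ) (g : Fin n → ℂ) : ℝ :=
  sInf {r : ℝ | ∃ h : Fin n → ℂ, Sparse s h ∧ r = norm1 (fun i => h i - g i)}

/-- The 1-periodic signal with Fourier coefficients `c`. -/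
def fcont (c : ℤ → ℂ) (x : ℝ) : ℂ := ∑' ℓ : ℤ, c ℓ * ce (ℓ * x)

/-- Tail `∑_{|ℓ|>Ñ} |c_ℓ|` of the Fourier coefficients. -/
def tailSum (N : ℕ) (c : ℤ → ℂ) : ℝ :=
  ∑' ℓ : ℤ, if Nt N < |ℓ| then ‖c ℓ‖ else 0

/-- The distribution `𝒟` satisfies the deviation model with parameter `θ`. -/
def DevModel (N m : ℕ) (𝒟 : Measure ℝ) (θ : ℝ) : Prop :=
  ∀ j : ℤ, j ≠ 0 → (|j| : ℝ) ≤ 2 * ((N : ℝ) - 1) / m →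
    (2 * N / m) * ‖∫ x, ce (((j * m : ℤ) : ℝ) * x) ∂𝒟‖ ≤ θ

/-- The random nonuniform sample points `t̃_k = (k-1)/m - 1/2 + Δ_k`. -/
def samplePts {Ω : Type*} (m : ℕ) (Δ : Fin m → Ω → ℝ) (ω : Ω) : Fin m → ℝ :=
  fun k => (k : ℝ) / m - 1 / 2 + Δ k ω

end

/-- Centered nonuniform DFT matrix `𝒩 ∈ ℂ^{m×N}`. -/
noncomputable def ndftM (N m : ℕ) (tt : Fin m → ℝ) : Matrix (Fin m) (Fin N) ℂ :=
  fun k u => ((Real.sqrt N : ℂ))⁻¹ * ce (-(tt k) * ((u : ℤ) - Nt N))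

lemma ce_add (x y : ℝ) : ce (x + y) = ce x * ce y := by
  simp [ce, ← Complex.exp_add]; ring_nf

lemma ce_zero : ce 0 = 1 := by simp [ce]

lemma ce_neg (x : ℝ) : ce (-x) = (ce x)⁻¹ := by
  rw [ce, ce, ← Complex.exp_neg]; congr 1; push_cast; ring

lemma conj_ce (x : ℝ) : (starRingEnd ℂ) (ce x) = ce (-x) := by
  rw [ce, ce, ← Complex.exp_conj]
  congr 1
  simp only [_root_.map_mul, Complex.conj_I, Complex.conj_ofReal, map_ofNat]
  push_cast; ring

lemma ce_int (n : ℤ) : ce n = 1 := by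
  rw [ce]
  have := Complex.exp_int_mul_two_pi_mul_I n
  rw [← this]; congr 1; push_cast; ring

lemma ce_nat_mul (k : ℕ) (x : ℝ) : ce (k * x) = ce x ^ k := by
  rw [ce, ce, ← Complex.exp_nat_mul]; congr 1; push_cast; ring

lemma ce_eq_one_iff (x : ℝ) : ce x = 1 ↔ ∃ n : ℤ, x = n := by
  rw [ce, Complex.exp_eq_one_iff]
  constructor
  · rintro ⟨n, hn⟩
    refine ⟨n, ?_⟩
    have hpi : (2 * Real.pi * Complex.I) ≠ 0 := by
      simp [Real.pi_ne_zero, Complex.I_ne_zero]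
    have h2 : (2 * (Real.pi:ℂ) * Complex.I) * x = (2 * (Real.pi:ℂ) * Complex.I) * n := by
      rw [hn]; ring
    have : (x : ℂ) = n := mul_left_cancel₀ hpi h2
    exact_mod_cast this
  · rintro ⟨n, hn⟩
    exact ⟨n, by rw [hn]; push_cast; ring⟩

lemma abs_ce (x : ℝ) : ‖ce x‖ = 1 := by
  rw [ce, Complex.norm_exp]
  norm_num [Complex.mul_re]

lemma geom_ce (n : ℕ) (r : ℝ) (h1 : ce r ≠ 1) (hn : ce ((n : ℝ) * r) = 1) :
    ∑ k : Fin n, ce ((k : ℝ) * r) = 0 := by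
  have h : ∑ k : Fin n, ce ((k : ℝ) * r) = ∑ k ∈ Finset.range n, ce r ^ k := by
    rw [Fin.sum_univ_eq_sum_range (fun k : ℕ => ce ((k : ℝ) * r))]
    exact Finset.sum_congr rfl fun k _ => ce_nat_mul k r
  rw [h, geom_sum_eq h1, ← ce_nat_mul, hn]
  simp

lemma key_sum (m : ℕ) (hm : 0 < m) (d : ℤ) (hd : d ≠ 0) (hdm : |d| < (m : ℤ)) :
    ∑ k : Fin m, ce (-((k : ℝ) / m - 1 / 2) * d) = 0 := by
  have hmne : (m : ℝ) ≠ 0 := Nat.cast_ne_zero.mpr hm.ne'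
  have h1 : ce (-(d : ℝ) / m) ≠ 1 := by
    rw [ne_eq, ce_eq_one_iff]
    rintro ⟨n, hn⟩
    have hd' : (d : ℝ) = (-n : ℤ) * m := by
      push_cast
      field_simp at hn
      linarith
    have hdz : d = -n * m := by exact_mod_cast hd'
    have : (m : ℤ) ∣ d := ⟨-n, by rw [hdz]; ring⟩
    have := Int.le_of_dvd (abs_pos.mpr hd) ((dvd_abs _ _).mpr this)
    omega
  have hn1 : ce ((m : ℝ) * (-(d : ℝ) / m)) = 1 := by
    have : (m : ℝ) * (-(d : ℝ) / m) = ((-d : ℤ) : ℝ) := by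
      push_cast; field_simp
    rw [this, ce_int]
  have hgeom := geom_ce m (-(d : ℝ) / m) h1 hn1
  have : ∀ k : Fin m, ce (-((k : ℝ) / m - 1 / 2) * d)
      = ce ((d : ℝ) / 2) * ce ((k : ℝ) * (-(d : ℝ) / m)) := by
    intro k
    rw [← ce_add]
    congr 1
    field_simp
    ring
  rw [Finset.sum_congr rfl fun k _ => this k, ← Finset.mul_sum, hgeom, mul_zero]

lemma geom_ce_shift (n : ℕ) (a : ℤ) (r : ℝ) (h1 : ce r ≠ 1) (hn : ce ((n : ℝ) * r) = 1) :
    ∑ u : Fin n, ce ((((u : ℤ) - a : ℤ) : ℝ) * r) = 0 := by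
  have : ∀ u : Fin n, ce ((((u : ℤ) - a : ℤ) : ℝ) * r)
      = ce (-(a : ℝ) * r) * ce ((u : ℝ) * r) := by
    intro u
    rw [← ce_add]
    congr 1
    push_cast
    ring
  rw [Finset.sum_congr rfl fun u _ => this u, ← Finset.mul_sum, geom_ce n r h1 hn, mul_zero]

lemma ce_ne_one_of_ndvd (n : ℕ) (hn : 0 < n) (d : ℤ) (hd : ¬ (n : ℤ) ∣ d) :
    ce ((d : ℝ) / n) ≠ 1 := by
  rw [ne_eq, ce_eq_one_iff]
  rintro ⟨j, hj⟩
  apply hd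
  have hnne : (n : ℝ) ≠ 0 := Nat.cast_ne_zero.mpr hn.ne'
  have h2 : (d : ℝ) = (j * n : ℤ) := by push_cast; field_simp at hj ⊢; linarith
  have h3 : d = j * (n : ℤ) := by exact_mod_cast h2
  exact ⟨j, by rw [h3]; ring⟩

lemma ce_nat_mul_div (n : ℕ) (hn : 0 < n) (d : ℤ) : ce ((n : ℝ) * ((d : ℝ) / n)) = 1 := by
  have hnne : (n : ℝ) ≠ 0 := Nat.cast_ne_zero.mpr hn.ne'
  have : (n : ℝ) * ((d : ℝ) / n) = ((d : ℤ) : ℝ) := by field_simp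
  rw [this, ce_int]

lemma norm2_sq {n : ℕ} (v : Fin n → ℂ) : norm2 v ^ 2 = ∑ i, Complex.normSq (v i) := by
  rw [norm2, Real.sq_sqrt (Finset.sum_nonneg fun i _ => sq_nonneg _)]
  exact Finset.sum_congr rfl fun i _ => Complex.sq_norm _

lemma normsq_mulVec {m n : ℕ} (M : Matrix (Fin m) (Fin n) ℂ) (v : Fin n → ℂ) :
    (norm2 (M.mulVec v)) ^ 2 =
      (∑ k, ∑ u, ∑ u', M k u * (starRingEnd ℂ) (M k u') * (v u * (starRingEnd ℂ) (v u'))).re := by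
  rw [norm2_sq]
  have h1 : ∀ k, Complex.normSq (M.mulVec v k)
      = (∑ u, ∑ u', M k u * (starRingEnd ℂ) (M k u') * (v u * (starRingEnd ℂ) (v u'))).re := by
    intro k
    have : (M.mulVec v k) * (starRingEnd ℂ) (M.mulVec v k)
        = ∑ u, ∑ u', M k u * (starRingEnd ℂ) (M k u') * (v u * (starRingEnd ℂ) (v u')) := by
      rw [Matrix.mulVec, dotProduct, map_sum, Finset.sum_mul_sum]
      exact Finset.sum_congr rfl fun u _ => Finset.sum_congr rfl fun u' _ => by
        rw [_root_.map_mul]; ring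
    calc Complex.normSq (M.mulVec v k)
        = (M.mulVec v k * (starRingEnd ℂ) (M.mulVec v k)).re := by
          rw [Complex.mul_conj, Complex.ofReal_re]
      _ = _ := by rw [this]
  rw [Complex.re_sum]
  exact Finset.sum_congr rfl fun k _ => h1 k

lemma ce_mul_conj_ce (x y : ℝ) : ce x * (starRingEnd ℂ) (ce y) = ce (x - y) := by
  rw [conj_ce, ← ce_add]; ring_nf

lemma sqrt_inv_sq (N : ℕ) (hN : 0 < N) :
    ((Real.sqrt N : ℂ))⁻¹ * ((Real.sqrt N : ℂ))⁻¹ = (N : ℂ)⁻¹ := by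
  rw [← mul_inv, ← Complex.ofReal_mul, Real.mul_self_sqrt (by positivity),
    Complex.ofReal_natCast]

lemma not_dvd_of_abs_lt (n : ℕ) (d : ℤ) (hd : d ≠ 0) (h : |d| < (n : ℤ)) : ¬ (n : ℤ) ∣ d := by
  intro hdvd
  have := Int.le_of_dvd (abs_pos.mpr hd) ((dvd_abs _ _).mpr hdvd)
  omega

lemma entry_prod (N : ℕ) (u p p' : Fin N) :
    (dftF N)ᴴ u p * (starRingEnd ℂ) ((dftF N)ᴴ u p')
      = ((Real.sqrt N : ℂ))⁻¹ * ((Real.sqrt N : ℂ))⁻¹ *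
        ce ((((u : ℤ) - Nt N : ℤ) : ℝ) * ((((p : ℤ) - (p' : ℤ) : ℤ) : ℝ) / N)) := by
  simp only [Matrix.conjTranspose_apply, dftF, Complex.star_def, _root_.map_mul,
    Complex.conj_conj, map_inv₀, Complex.conj_ofReal, conj_ce]
  rw [mul_mul_mul_comm]
  congr 1
  rw [← ce_add]
  congr 1
  simp only [tg]
  push_cast
  ring

lemma dft_sum_if (N : ℕ) (hN : 0 < N) (p p' : Fin N) :
    ∑ u : Fin N, ce ((((u : ℤ) - Nt N : ℤ) : ℝ) * ((((p : ℤ) - (p' : ℤ) : ℤ) : ℝ) / N))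
      = if p = p' then (N : ℂ) else 0 := by
  by_cases h : p = p'
  · subst h
    simp [ce_zero]
  · rw [if_neg h]
    have hd0 : ((p : ℤ) - (p' : ℤ)) ≠ 0 := by
      intro hh
      exact h (Fin.ext (by omega))
    have habs : |((p : ℤ) - (p' : ℤ))| < (N : ℤ) := by
      rw [abs_lt]
      have := p.isLt; have := p'.isLt; omega
    exact geom_ce_shift N (Nt N) _
      (ce_ne_one_of_ndvd N hN _ (not_dvd_of_abs_lt N _ hd0 habs))
      (ce_nat_mul_div N hN _)

lemma dft_unitary (N : ℕ) (hN : 0 < N) (v : Fin N → ℂ) :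
    norm2 ((dftF N)ᴴ.mulVec v) ^ 2 = norm2 v ^ 2 := by
  rw [normsq_mulVec, norm2_sq]
  have h1 : (∑ u : Fin N, ∑ p : Fin N, ∑ p' : Fin N,
        (dftF N)ᴴ u p * (starRingEnd ℂ) ((dftF N)ᴴ u p') * (v p * (starRingEnd ℂ) (v p')))
      = ∑ p : Fin N, ∑ p' : Fin N, (N : ℂ)⁻¹ * (v p * (starRingEnd ℂ) (v p')) *
          ∑ u : Fin N, ce ((((u : ℤ) - Nt N : ℤ) : ℝ) * ((((p : ℤ) - (p' : ℤ) : ℤ) : ℝ) / N)) := by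
    rw [Finset.sum_comm]
    refine Finset.sum_congr rfl fun p _ => ?_
    rw [Finset.sum_comm]
    refine Finset.sum_congr rfl fun p' _ => ?_
    rw [Finset.mul_sum]
    refine Finset.sum_congr rfl fun u _ => ?_
    rw [entry_prod, sqrt_inv_sq N hN]
    ring
  rw [h1]
  have h2 : ∀ p : Fin N, ∑ p' : Fin N, (N : ℂ)⁻¹ * (v p * (starRingEnd ℂ) (v p')) *
        (if p = p' then (N : ℂ) else 0) = v p * (starRingEnd ℂ) (v p) := by
    intro p
    have : ∀ p' : Fin N, (N : ℂ)⁻¹ * (v p * (starRingEnd ℂ) (v p')) *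
        (if p = p' then (N : ℂ) else 0)
        = if p = p' then v p * (starRingEnd ℂ) (v p') else 0 := by
      intro p'
      by_cases h : p = p'
      · rw [if_pos h, if_pos h]
        have hNne : (N : ℂ) ≠ 0 := Nat.cast_ne_zero.mpr hN.ne'
        field_simp
      · simp [h]
    rw [Finset.sum_congr rfl fun p' _ => this p', Finset.sum_ite_eq]
    simp
  have h3 : ∀ p : Fin N, ∑ p' : Fin N, (N : ℂ)⁻¹ * (v p * (starRingEnd ℂ) (v p')) *
        ∑ u : Fin N, ce ((((u : ℤ) - Nt N : ℤ) : ℝ) * ((((p : ℤ) - (p' : ℤ) : ℤ) : ℝ) / N))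
      = v p * (starRingEnd ℂ) (v p) := by
    intro p
    rw [← h2 p]
    exact Finset.sum_congr rfl fun p' _ => by rw [dft_sum_if N hN]
  rw [Finset.sum_congr rfl fun p _ => h3 p, Complex.re_sum]
  exact Finset.sum_congr rfl fun p _ => by rw [Complex.mul_conj, Complex.ofReal_re]

lemma Nt_odd (N : ℕ) (hN : Odd N) : (N : ℤ) = 2 * Nt N + 1 := by
  obtain ⟨r, hr⟩ := hN
  subst hr
  simp only [Nt]
  push_cast
  omega

lemma sum_Icc_eq (N : ℕ) (hN : Odd N) (f : ℤ → ℂ) :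
    ∑ u ∈ Finset.Icc (-(Nt N)) (Nt N), f u = ∑ j ∈ Finset.range N, f ((j : ℤ) - Nt N) := by
  have hNt := Nt_odd N hN
  refine Finset.sum_nbij' (i := fun u => (u + Nt N).toNat) (j := fun n => (n : ℤ) - Nt N)
    ?_ ?_ ?_ ?_ ?_
  · intro a ha
    simp only [Finset.mem_Icc] at ha
    simp only [Finset.mem_range]
    omega
  · intro a ha
    simp only [Finset.mem_range] at ha
    simp only [Finset.mem_Icc]
    omega
  · intro a ha
    simp only [Finset.mem_Icc] at ha
    beta_reduce
    omega
  · intro a ha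
    simp only [Finset.mem_range] at ha
    beta_reduce
    omega
  · intro a ha
    simp only [Finset.mem_Icc] at ha
    congr 1
    beta_reduce
    omega

lemma dirS_eq (N m : ℕ) (hN : Odd N) (hNpos : 0 < N) (tt : Fin m → ℝ) (v : Fin N → ℂ) :
    (dirS N m tt).mulVec v = (ndftM N m tt).mulVec ((dftF N)ᴴ.mulVec v) := by
  funext k
  have h2 : ∀ j : Fin N, (dftF N)ᴴ.mulVec v j
      = ∑ p : Fin N, ((Real.sqrt N : ℂ))⁻¹ * ce (tg N p * (((j : ℤ) - Nt N : ℤ) : ℝ)) * v p := by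
    intro j
    simp only [Matrix.mulVec, dotProduct, Matrix.conjTranspose_apply, dftF,
      Complex.star_def, _root_.map_mul, map_inv₀, Complex.conj_ofReal, conj_ce]
    refine Finset.sum_congr rfl fun p _ => ?_
    congr 2
    push_cast
    ring
  have hterm : ∀ (j : ℤ) (p : Fin N),
      (N : ℂ)⁻¹ * ce (((j - Nt N : ℤ) : ℝ) * (tg N p - tt k)) * v p
      = ((Real.sqrt N : ℂ))⁻¹ * ce (-(tt k) * ((j - Nt N : ℤ) : ℝ)) *
        (((Real.sqrt N : ℂ))⁻¹ * ce (tg N p * ((j - Nt N : ℤ) : ℝ)) * v p) := by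
    intro j p
    have hce : ce (-(tt k) * ((j - Nt N : ℤ) : ℝ)) * ce (tg N p * ((j - Nt N : ℤ) : ℝ))
        = ce (((j - Nt N : ℤ) : ℝ) * (tg N p - tt k)) := by
      rw [← ce_add]; congr 1; ring
    symm
    calc ((Real.sqrt N : ℂ))⁻¹ * ce (-(tt k) * ((j - Nt N : ℤ) : ℝ)) *
          (((Real.sqrt N : ℂ))⁻¹ * ce (tg N p * ((j - Nt N : ℤ) : ℝ)) * v p)
        = ((Real.sqrt N : ℂ))⁻¹ * ((Real.sqrt N : ℂ))⁻¹ *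
            (ce (-(tt k) * ((j - Nt N : ℤ) : ℝ)) * ce (tg N p * ((j - Nt N : ℤ) : ℝ))) * v p := by
          ring
      _ = (N : ℂ)⁻¹ * ce (((j - Nt N : ℤ) : ℝ) * (tg N p - tt k)) * v p := by
          rw [hce, sqrt_inv_sq N hNpos]
  have hdirS : ∀ p : Fin N, dirS N m tt k p
      = ∑ j ∈ Finset.range N, (N : ℂ)⁻¹ * ce ((((j : ℤ) - Nt N : ℤ) : ℝ) * (tg N p - tt k)) := by
    intro p
    show (N : ℂ)⁻¹ * ∑ u ∈ Finset.Icc (-(Nt N)) (Nt N), ce ((u : ℝ) * (tg N p - tt k)) = _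
    rw [sum_Icc_eq N hN (fun u => ce ((u : ℝ) * (tg N p - tt k))), Finset.mul_sum]
  show ∑ p : Fin N, dirS N m tt k p * v p
      = ∑ j : Fin N, ndftM N m tt k j * ((dftF N)ᴴ.mulVec v) j
  calc ∑ p : Fin N, dirS N m tt k p * v p
      = ∑ p : Fin N, ∑ j ∈ Finset.range N,
          (N : ℂ)⁻¹ * ce ((((j : ℤ) - Nt N : ℤ) : ℝ) * (tg N p - tt k)) * v p := by
        refine Finset.sum_congr rfl fun p _ => ?_
        rw [hdirS p, Finset.sum_mul]
    _ = ∑ j ∈ Finset.range N, ∑ p : Fin N,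
          (N : ℂ)⁻¹ * ce ((((j : ℤ) - Nt N : ℤ) : ℝ) * (tg N p - tt k)) * v p :=
        Finset.sum_comm
    _ = ∑ j ∈ Finset.range N, ((Real.sqrt N : ℂ))⁻¹ * ce (-(tt k) * (((j : ℤ) - Nt N : ℤ) : ℝ)) *
          ∑ p : Fin N, ((Real.sqrt N : ℂ))⁻¹ * ce (tg N p * (((j : ℤ) - Nt N : ℤ) : ℝ)) * v p := by
        refine Finset.sum_congr rfl fun j _ => ?_
        rw [Finset.mul_sum]
        exact Finset.sum_congr rfl fun p _ => hterm (j : ℤ) p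
    _ = ∑ j : Fin N, ((Real.sqrt N : ℂ))⁻¹ * ce (-(tt k) * ((((j : Fin N) : ℤ) - Nt N : ℤ) : ℝ)) *
          ∑ p : Fin N, ((Real.sqrt N : ℂ))⁻¹ *
            ce (tg N p * ((((j : Fin N) : ℤ) - Nt N : ℤ) : ℝ)) * v p :=
        (Fin.sum_univ_eq_sum_range (fun j : ℕ =>
          ((Real.sqrt N : ℂ))⁻¹ * ce (-(tt k) * (((j : ℤ) - Nt N : ℤ) : ℝ)) *
          ∑ p : Fin N, ((Real.sqrt N : ℂ))⁻¹ *
            ce (tg N p * (((j : ℤ) - Nt N : ℤ) : ℝ)) * v p) N).symm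
    _ = ∑ j : Fin N, ndftM N m tt k j * ((dftF N)ᴴ.mulVec v) j := by
        refine Finset.sum_congr rfl fun j _ => ?_
        rw [h2 j]
        congr 1
        simp [ndftM]

lemma ce_continuous (c : ℝ) : Continuous fun x : ℝ => ce (c * x) := by
  unfold ce
  exact Complex.continuous_exp.comp (by continuity)

lemma integ_ce {Ωs : Type} [MeasurableSpace Ωs] (μ : Measure Ωs) [IsProbabilityMeasure μ]
    (g : Ωs → ℝ) (hg : Measurable g) : Integrable (fun ω => ce (g ω)) μ := by
  have hmeas : Measurable fun ω => ce (g ω) := by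
    unfold ce
    exact Complex.measurable_exp.comp
      (measurable_const.mul (Complex.measurable_ofReal.comp hg))
  refine Integrable.mono' (integrable_const (1 : ℝ)) hmeas.aestronglyMeasurable ?_
  filter_upwards with ω
  rw [abs_ce]

lemma ndft_entry_prod (N m : ℕ) (hN : 0 < N) (tt : Fin m → ℝ) (k : Fin m) (u u' : Fin N) :
    ndftM N m tt k u * (starRingEnd ℂ) (ndftM N m tt k u')
      = (N : ℂ)⁻¹ * ce (-(tt k) * (((u : ℤ) - (u' : ℤ) : ℤ) : ℝ)) := by
  simp only [ndftM, _root_.map_mul, map_inv₀, Complex.conj_ofReal, conj_ce]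
  rw [mul_mul_mul_comm, sqrt_inv_sq N hN]
  congr 1
  rw [← ce_add]
  congr 1
  push_cast
  ring

theorem expected_isometry_ndft
    (N m : ℕ) (hNpos : 0 < N) (hmpos : 0 < m) (hm : N ≤ m)
    (Ωs : Type) (mΩ : MeasurableSpace Ωs) (μ : Measure Ωs) (hμ : IsProbabilityMeasure μ)
    (Δ : Fin m → Ωs → ℝ) (hmeas : ∀ k, Measurable (Δ k))
    (𝒟 : Measure ℝ) (h𝒟 : IsProbabilityMeasure 𝒟)
    (hdist : ∀ k, Measure.map (Δ k) μ = 𝒟)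
    (w : Fin N → ℂ) :
    (∫ ω, norm2 ((ndftM N m (samplePts m Δ ω)).mulVec w) ^ 2 ∂μ) =
      (m : ℝ) / N * norm2 w ^ 2 := by
  classical
  -- the integrand for each index triple
  set g : Fin m × Fin N × Fin N → Ωs → ℂ := fun t ω =>
    (N : ℂ)⁻¹ * ce (-(samplePts m Δ ω t.1) * (((t.2.1 : ℤ) - (t.2.2 : ℤ) : ℤ) : ℝ)) *
      (w t.2.1 * (starRingEnd ℂ) (w t.2.2)) with hg
  have hpt : ∀ ω, norm2 ((ndftM N m (samplePts m Δ ω)).mulVec w) ^ 2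
      = (∑ t : Fin m × Fin N × Fin N, g t ω).re := by
    intro ω
    rw [normsq_mulVec]
    rw [Fintype.sum_prod_type]
    congr 1
    refine Finset.sum_congr rfl fun k _ => ?_
    rw [Fintype.sum_prod_type]
    refine Finset.sum_congr rfl fun u _ => Finset.sum_congr rfl fun u' _ => ?_
    rw [ndft_entry_prod N m hNpos _ k u u']
  have hginteg : ∀ t : Fin m × Fin N × Fin N, Integrable (g t) μ := by
    intro t
    have hmg : Measurable fun ω => -(samplePts m Δ ω t.1) *
        (((t.2.1 : ℤ) - (t.2.2 : ℤ) : ℤ) : ℝ) := by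
      have : Measurable fun ω => samplePts m Δ ω t.1 :=
        measurable_const.add (hmeas t.1)
      exact this.neg.mul_const _
    exact ((integ_ce μ _ hmg).const_mul ((N : ℂ)⁻¹)).mul_const _
  have hGinteg : Integrable (fun ω => ∑ t : Fin m × Fin N × Fin N, g t ω) μ :=
    integrable_finset_sum _ fun t _ => hginteg t
  calc (∫ ω, norm2 ((ndftM N m (samplePts m Δ ω)).mulVec w) ^ 2 ∂μ)
      = ∫ ω, (∑ t : Fin m × Fin N × Fin N, g t ω).re ∂μ := by
        exact integral_congr_ae (Filter.Eventually.of_forall fun ω => hpt ω)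
    _ = (∫ ω, ∑ t : Fin m × Fin N × Fin N, g t ω ∂μ).re := by
        have := integral_re (μ := μ) hGinteg
        simpa using this
    _ = (∑ t : Fin m × Fin N × Fin N, ∫ ω, g t ω ∂μ).re := by
        rw [integral_finset_sum _ fun t _ => hginteg t]
    _ = (m : ℝ) / N * norm2 w ^ 2 := by
        have hval : ∀ t : Fin m × Fin N × Fin N, ∫ ω, g t ω ∂μ
            = ((N : ℂ)⁻¹ * ce (-((t.1 : ℝ) / m - 1 / 2) *
                (((t.2.1 : ℤ) - (t.2.2 : ℤ) : ℤ) : ℝ)) * (w t.2.1 * (starRingEnd ℂ) (w t.2.2))) *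
              ∫ x, ce (-((((t.2.1 : ℤ) - (t.2.2 : ℤ) : ℤ) : ℝ)) * x) ∂𝒟 := by
          rintro ⟨k, u, u'⟩
          have hptg : ∀ ω, g (k, u, u') ω
              = ((N : ℂ)⁻¹ * ce (-((k : ℝ) / m - 1 / 2) * (((u : ℤ) - (u' : ℤ) : ℤ) : ℝ)) *
                  (w u * (starRingEnd ℂ) (w u'))) *
                ce (-((((u : ℤ) - (u' : ℤ) : ℤ) : ℝ)) * Δ k ω) := by
            intro ω
            rw [hg]
            simp only [samplePts]
            rw [show (-(((k : ℝ) / m - 1 / 2) + Δ k ω) * (((u : ℤ) - (u' : ℤ) : ℤ) : ℝ))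
                = (-((k : ℝ) / m - 1 / 2) * (((u : ℤ) - (u' : ℤ) : ℤ) : ℝ))
                  + (-((((u : ℤ) - (u' : ℤ) : ℤ) : ℝ)) * Δ k ω) from by ring, ce_add]
            ring
          rw [integral_congr_ae (Filter.Eventually.of_forall hptg), integral_const_mul]
          congr 1
          rw [← hdist k]
          exact (integral_map (hmeas k).aemeasurable
            ((ce_continuous _).aestronglyMeasurable)).symm
        rw [Finset.sum_congr rfl fun t _ => hval t]
        have hsum : (∑ t : Fin m × Fin N × Fin N,
              ((N : ℂ)⁻¹ * ce (-((t.1 : ℝ) / m - 1 / 2) *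
                  (((t.2.1 : ℤ) - (t.2.2 : ℤ) : ℤ) : ℝ)) *
                (w t.2.1 * (starRingEnd ℂ) (w t.2.2))) *
              ∫ x, ce (-((((t.2.1 : ℤ) - (t.2.2 : ℤ) : ℤ) : ℝ)) * x) ∂𝒟)
            = ∑ u : Fin N, ∑ u' : Fin N,
              ((N : ℂ)⁻¹ * (w u * (starRingEnd ℂ) (w u')) *
                ∫ x, ce (-((((u : ℤ) - (u' : ℤ) : ℤ) : ℝ)) * x) ∂𝒟) *
              ∑ k : Fin m, ce (-((k : ℝ) / m - 1 / 2) * (((u : ℤ) - (u' : ℤ) : ℤ) : ℝ)) := by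
          rw [Fintype.sum_prod_type, Finset.sum_comm, Fintype.sum_prod_type]
          refine Finset.sum_congr rfl fun u _ => Finset.sum_congr rfl fun u' _ => ?_
          rw [Finset.mul_sum]
          refine Finset.sum_congr rfl fun k _ => ?_
          ring
        rw [hsum]
        have hdiag : ∀ u : Fin N, (∑ u' : Fin N,
              ((N : ℂ)⁻¹ * (w u * (starRingEnd ℂ) (w u')) *
                ∫ x, ce (-((((u : ℤ) - (u' : ℤ) : ℤ) : ℝ)) * x) ∂𝒟) *
              ∑ k : Fin m, ce (-((k : ℝ) / m - 1 / 2) * (((u : ℤ) - (u' : ℤ) : ℤ) : ℝ)))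
            = (N : ℂ)⁻¹ * (w u * (starRingEnd ℂ) (w u)) * m := by
          intro u
          rw [Finset.sum_eq_single u]
          · have h0 : (((u : ℤ) - (u : ℤ) : ℤ) : ℝ) = 0 := by push_cast; ring
            rw [h0]
            simp only [mul_zero, neg_zero, zero_mul, ce_zero]
            rw [integral_const]
            simp [mul_comm]
          · intro u' _ hne
            have hd0 : ((u : ℤ) - (u' : ℤ)) ≠ 0 := by
              intro hh
              exact hne (Fin.ext (by omega)).symm
            have habs : |((u : ℤ) - (u' : ℤ))| < (m : ℤ) := by
              rw [abs_lt]
              have h1 := u.isLt; have h2 := u'.isLt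
              omega
            rw [key_sum m hmpos _ hd0 habs, mul_zero]
          · intro h
            exact absurd (Finset.mem_univ u) h
        rw [Finset.sum_congr rfl fun u _ => hdiag u]
        have hre : ∀ u : Fin N, ((N : ℂ)⁻¹ * (w u * (starRingEnd ℂ) (w u)) * m)
            = ((((m : ℝ) / N * Complex.normSq (w u)) : ℝ) : ℂ) := by
          intro u
          rw [Complex.mul_conj]
          push_cast
          ring
        rw [Finset.sum_congr rfl fun u _ => hre u, Complex.re_sum]
        rw [norm2_sq, Finset.mul_sum]
        exact Finset.sum_congr rfl fun u _ => by rw [Complex.ofReal_re]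


/-- for `m ≥ N` and i.i.d. deviations with arbitrary common distribution,
the randomly sampled Dirichlet kernel is an isometry in expectation:
`E‖Sv‖₂² = (m/N)‖v‖₂²`, equivalently `E‖𝒩v‖₂² = (m/N)‖v‖₂²`. -/
theorem expected_isometry
    (N m : ℕ) (hN : Odd N) (hNpos : 0 < N) (hm : N ≤ m)
    (Ωs : Type) (mΩ : MeasurableSpace Ωs) (μ : Measure Ωs) (hμ : IsProbabilityMeasure μ)
    (Δ : Fin m → Ωs → ℝ) (hmeas : ∀ k, Measurable (Δ k))
    (hindep : ProbabilityTheory.iIndepFun Δ μ)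
    (𝒟 : Measure ℝ) (h𝒟 : IsProbabilityMeasure 𝒟)
    (hdist : ∀ k, Measure.map (Δ k) μ = 𝒟)
    (v : Fin N → ℂ) :
    (∫ ω, norm2 ((dirS N m (samplePts m Δ ω)).mulVec v) ^ 2 ∂μ) =
      (m : ℝ) / N * norm2 v ^ 2 ∧
    (∫ ω, norm2 ((ndftM N m (samplePts m Δ ω)).mulVec v) ^ 2 ∂μ) =
      (m : ℝ) / N * norm2 v ^ 2 := by
  have hmpos : 0 < m := lt_of_lt_of_le hNpos hm
  constructor
  · have h1 := expected_isometry_ndft N m hNpos hmpos hm Ωs mΩ μ hμ Δ hmeas 𝒟 h𝒟 hdist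
      ((dftF N)ᴴ.mulVec v)
    calc (∫ ω, norm2 ((dirS N m (samplePts m Δ ω)).mulVec v) ^ 2 ∂μ)
        = ∫ ω, norm2 ((ndftM N m (samplePts m Δ ω)).mulVec ((dftF N)ᴴ.mulVec v)) ^ 2 ∂μ := by
          refine integral_congr_ae (Filter.Eventually.of_forall fun ω => ?_)
          simp only []
          rw [dirS_eq N m hN hNpos (samplePts m Δ ω) v]
      _ = (m : ℝ) / N * norm2 ((dftF N)ᴴ.mulVec v) ^ 2 := h1
      _ = (m : ℝ) / N * norm2 v ^ 2 := by rw [dft_unitary N hNpos]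
  · exact expected_isometry_ndft N m hNpos hmpos hm Ωs mΩ μ hμ Δ hmeas 𝒟 h𝒟 hdist v
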